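/- Let π be a probability measure on a measurable space Z and ℓ : Z → [0,∞) measurable with 0 < ∫ ℓ dπ < ∞. Let Q be a probability measure on a product space Z × W (a joint variational model over latent variables z and variational latent variables w) with Z-marginal q, and let R be a Markov kernel from Z to W (an auxiliary model r(w | z)). Assume q ≪ π with KL(q ‖ π) < ∞, log ℓ is q-integrable, and the expected auxiliary divergence ∫ KL(Q_{W|Z=z} ‖ R(z)) dq(z) is finite, where Q_{W|Z=z} denotes the conditional (disintegration) of Q given z. Then log ∫ ℓ dπ ≥ ∫ log ℓ dq − KL(q ‖ π) − ∫ KL(Q_{W|Z=z} ‖ R(z)) dq(z). -/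

import Mathlib

open MeasureTheory ProbabilityTheory Set

/-- Gibbs' inequality: the KL divergence integral is nonnegative. -/
lemma gibbs_integral_llr_nonneg {α : Type*} [MeasurableSpace α] {μ ν : Measure α}
    [IsProbabilityMeasure μ] [IsProbabilityMeasure ν]
    (hμν : μ ≪ ν) (h_int : Integrable (llr μ ν) μ) :
    0 ≤ ∫ x, llr μ ν x ∂μ := by
  have hgl : ∫ x, llr μ ν x ∂μ
      = ∫ x, (μ.rnDeriv ν x).toReal * Real.log (μ.rnDeriv ν x).toReal ∂ν := by
    rw [← MeasureTheory.integral_rnDeriv_smul hμν]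
    rfl
  have h1 : Integrable
      (fun x => (μ.rnDeriv ν x).toReal * Real.log (μ.rnDeriv ν x).toReal) ν := by
    have := (MeasureTheory.integrable_rnDeriv_smul_iff (f := llr μ ν) hμν).mpr h_int
    simpa [llr, smul_eq_mul] using this
  have h2 : Integrable (fun x => (μ.rnDeriv ν x).toReal - 1) ν :=
    (Measure.integrable_toReal_rnDeriv).sub (integrable_const 1)
  have key : ∀ x, (μ.rnDeriv ν x).toReal - 1
      ≤ (μ.rnDeriv ν x).toReal * Real.log (μ.rnDeriv ν x).toReal := by
    intro x
    set t : ℝ := (μ.rnDeriv ν x).toReal with ht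
    have htn : 0 ≤ t := ENNReal.toReal_nonneg
    rcases htn.eq_or_lt with h | h
    · simp [← h]
    · have := Real.one_sub_inv_le_log_of_pos h
      have h' : t * (1 - t⁻¹) ≤ t * Real.log t :=
        mul_le_mul_of_nonneg_left this h.le
      have : t * (1 - t⁻¹) = t - 1 := by
        field_simp
      linarith
  have hmono : ∫ x, ((μ.rnDeriv ν x).toReal - 1) ∂ν
      ≤ ∫ x, (μ.rnDeriv ν x).toReal * Real.log (μ.rnDeriv ν x).toReal ∂ν :=
    integral_mono h2 h1 key
  have heq : ∫ x, ((μ.rnDeriv ν x).toReal - 1) ∂ν = 0 := by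
    rw [integral_sub Measure.integrable_toReal_rnDeriv (integrable_const 1),
      Measure.integral_toReal_rnDeriv hμν]
    simp
  rw [hgl]
  linarith

/-- hierarchical / auxiliary ELBO: Let `π` be a probability measure
on `Z` and `ℓ : Z → [0,∞)` measurable with `0 < ∫ ℓ dπ < ∞`. Let `Q` be a
probability measure on `Z × W` (a joint variational model) with `Z`-marginal `q`,
and let `R` be a Markov kernel from `Z` to `W` (an auxiliary model). Assume
`q ≪ π` with `KL(q ‖ π) < ∞`, `log ℓ` is `q`-integrable (in particular `ℓ > 0`
`q`-a.e.), and the expected auxiliary divergence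
`∫ KL(Q_{W|Z=z} ‖ R z) dq(z)` is finite, where `Q_{W|Z=z} = Q.condKernel z` is
the disintegration of `Q` given `z`. Then
`log ∫ ℓ dπ ≥ ∫ log ℓ dq − KL(q ‖ π) − ∫ KL(Q_{W|Z=z} ‖ R z) dq(z)`. -/
theorem hierarchical_elbo_le_log_evidence
    {Z W : Type*} [MeasurableSpace Z] [MeasurableSpace W]
    [StandardBorelSpace W] [Nonempty W]
    (π : Measure Z) [IsProbabilityMeasure π]
    (ℓ : Z → ℝ) (hℓ_meas : Measurable ℓ) (hℓ_nonneg : ∀ z, 0 ≤ ℓ z)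
    (hℓ_int : Integrable ℓ π) (hev_pos : 0 < ∫ z, ℓ z ∂π)
    (Q : Measure (Z × W)) [IsProbabilityMeasure Q]
    (R : Kernel Z W) [IsMarkovKernel R]
    (q : Measure Z) (hq : q = Q.map Prod.fst)
    (hac : q ≪ π) (hkl_int : Integrable (llr q π) q)
    (hlog_int : Integrable (fun z => Real.log (ℓ z)) q)
    (hℓ_pos : ∀ᵐ z ∂q, 0 < ℓ z)
    (haux_ac : ∀ᵐ z ∂q, Q.condKernel z ≪ R z)
    (haux_int : ∀ᵐ z ∂q, Integrable (llr (Q.condKernel z) (R z)) (Q.condKernel z))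
    (haux_outer :
      Integrable (fun z => ∫ w, llr (Q.condKernel z) (R z) w ∂(Q.condKernel z)) q) :
    (∫ z, Real.log (ℓ z) ∂q) - (∫ z, llr q π z ∂q)
        - (∫ z, (∫ w, llr (Q.condKernel z) (R z) w ∂(Q.condKernel z)) ∂q)
      ≤ Real.log (∫ z, ℓ z ∂π) := by
  haveI hqprob : IsProbabilityMeasure q := by
    rw [hq]; exact Measure.isProbabilityMeasure_map measurable_fst.aemeasurable
  -- the auxiliary divergence term is nonnegative
  have haux_nonneg : 0 ≤ ∫ z, (∫ w, llr (Q.condKernel z) (R z) w ∂(Q.condKernel z)) ∂q := by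
    refine integral_nonneg_of_ae ?_
    filter_upwards [haux_ac, haux_int] with z h1 h2
    exact gibbs_integral_llr_nonneg h1 h2
  -- the ELBO inequality proper
  set s : Set Z := {z | 0 < ℓ z} with hs_def
  have hs : MeasurableSet s := measurableSet_lt measurable_const hℓ_meas
  have hqs : q sᶜ = 0 := by
    have := hℓ_pos
    rwa [ae_iff] at this
  have hqv : q ≪ π.restrict s := by
    refine Measure.AbsolutelyContinuous.mk fun A hAm hA => ?_
    rw [Measure.restrict_apply hAm] at hA
    have h1 : q (A ∩ s) = 0 := hac hA
    have h2 : q (A \ s) = 0 := measure_mono_null (diff_subset_compl A s) hqs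
    have := measure_le_inter_add_diff q A s
    rw [h1, h2, add_zero] at this
    exact le_antisymm this zero_le
  have hrn : llr q (π.restrict s) =ᵐ[q] llr q π := by
    have h1 := Measure.rnDeriv_mul_rnDeriv (ν := π.restrict s) (κ := π) hqv
    have h2 := Measure.rnDeriv_restrict_self π hs
    filter_upwards [hac.ae_le h1, hac.ae_le h2, hℓ_pos] with z e1 e2 hz
    have hzs : z ∈ s := hz
    simp only [Pi.mul_apply] at e1
    rw [e2, indicator_of_mem hzs, Pi.one_apply, mul_one] at e1
    simp only [llr, e1]
  have h_int' : Integrable (llr q (π.restrict s)) q := hkl_int.congr hrn.symm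
  have hexp_ae : (fun z => ℓ z) =ᵐ[π.restrict s] fun z => Real.exp (Real.log (ℓ z)) := by
    refine (ae_restrict_iff' hs).mpr (ae_of_all _ fun z hz => ?_)
    exact (Real.exp_log hz).symm
  have hfν : Integrable (fun z => Real.exp (Real.log (ℓ z))) (π.restrict s) :=
    (hℓ_int.restrict).congr hexp_ae
  have hcompl : ∫ z in sᶜ, ℓ z ∂π = 0 := by
    refine setIntegral_eq_zero_of_forall_eq_zero fun z hz => ?_
    have : ¬ 0 < ℓ z := hz
    linarith [hℓ_nonneg z]
  have hexp : ∫ z, Real.exp (Real.log (ℓ z)) ∂(π.restrict s) = ∫ z, ℓ z ∂π := by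
    rw [← integral_congr_ae hexp_ae]
    have := integral_add_compl hs hℓ_int
    rw [← this, hcompl, add_zero]
  haveI : NeZero (π.restrict s) := by
    refine ⟨fun h0 => ?_⟩
    have : q univ = 0 := hqv (by simp [h0])
    simp [measure_univ] at this
  haveI : IsProbabilityMeasure ((π.restrict s).tilted fun z => Real.log (ℓ z)) :=
    isProbabilityMeasure_tilted hfν
  have hT := integral_llr_tilted_right (μ := q) (ν := π.restrict s)
    (f := fun z => Real.log (ℓ z)) hqv hlog_int hfν h_int'
  have hac2 : q ≪ (π.restrict s).tilted fun z => Real.log (ℓ z) :=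
    hqv.trans (absolutelyContinuous_tilted hfν)
  have hint2 : Integrable (llr q ((π.restrict s).tilted fun z => Real.log (ℓ z))) q :=
    integrable_llr_tilted_right hqv hlog_int h_int' hfν
  have hgibbs : 0 ≤ ∫ z, llr q ((π.restrict s).tilted fun z => Real.log (ℓ z)) z ∂q :=
    gibbs_integral_llr_nonneg hac2 hint2
  rw [hT, hexp] at hgibbs
  have heq : ∫ z, llr q (π.restrict s) z ∂q = ∫ z, llr q π z ∂q :=
    integral_congr_ae hrn
  rw [heq] at hgibbs
  linarith
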